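/- For any propositional formula F, the following conditions are equivalent to each other under the assumption F (i.e., every truth assignment satisfying F satisfies one iff it satisfies the others): (a) SM[F]; (b) the conjunction of the formulas ⋀Y → ¬NES_F(Y⃗) for all nonempty sets Y of atoms occurring in F; (c) the conjunction of the formulas ⋀Y → ¬NES_F(Y⃗) for all loops Y of F. -/
import Mathlib


set_option linter.unusedVariables false

namespace SMLF

/-- Terms: object variables (named by naturals) and object constants.
There are no function constants of positive arity. -/
inductive Term (C : Type) where
  | var : ℕ → Term C
  | const : C → Term C

variable {C P D : Type} {ar : P → ℕ}

def Term.eval (cI : C → D) (v : ℕ → D) : Term C → D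
  | .var x => v x
  | .const c => cI c

def Term.vars : Term C → Set ℕ
  | .var x => {x}
  | .const _ => ∅

def Term.consts : Term C → Set C
  | .var _ => ∅
  | .const c => {c}

def Term.subst (θ : ℕ → Term C) : Term C → Term C
  | .var x => θ x
  | .const c => .const c

def Term.isVar : Term C → Prop
  | .var _ => True
  | .const _ => False

/-- A (non-equality) atom `p(t₁,…,tₖ)`. -/
abbrev Atom (C P : Type) (ar : P → ℕ) := Σ p : P, Fin (ar p) → Term C

def Atom.subst (θ : ℕ → Term C) (a : Atom C P ar) : Atom C P ar :=
  ⟨a.1, fun i => (a.2 i).subst θ⟩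

def Atom.vars (a : Atom C P ar) : Set ℕ := {x | ∃ i, a.2 i = Term.var x}

/-- An interpretation of the predicate constants over universe `D`
(also used for tuples `u` of predicate variables). -/
def PredI (P : Type) (ar : P → ℕ) (D : Type) : Type := ∀ p : P, (Fin (ar p) → D) → Prop

/-- `u ≤ p` : conjunction of ∀x(uᵢ(x) → pᵢ(x)). -/
def PredI.le (uI pI : PredI P ar D) : Prop := ∀ p xs, uI p xs → pI p xs

/-- `u = p` : conjunction of ∀x(uᵢ(x) ↔ pᵢ(x)). -/
def PredI.eqv (uI pI : PredI P ar D) : Prop := ∀ p xs, uI p xs ↔ pI p xs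

/-- `u < p` : (u ≤ p) ∧ ¬(u = p). -/
def PredI.lt (uI pI : PredI P ar D) : Prop := PredI.le uI pI ∧ ¬ PredI.eqv uI pI

/-- `Nonempty(u)` : ∃x¹ u₁(x¹) ∨ … ∨ ∃xⁿ uₙ(xⁿ). -/
def PredI.nonemp (uI : PredI P ar D) : Prop := ∃ p xs, uI p xs

/-- First-order formulas (¬F is shorthand for F → ⊥). -/
inductive Fml (C P : Type) (ar : P → ℕ) where
  | atom : (p : P) → (Fin (ar p) → Term C) → Fml C P ar
  | eq : Term C → Term C → Fml C P ar
  | bot : Fml C P ar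
  | and : Fml C P ar → Fml C P ar → Fml C P ar
  | or : Fml C P ar → Fml C P ar → Fml C P ar
  | imp : Fml C P ar → Fml C P ar → Fml C P ar
  | all : ℕ → Fml C P ar → Fml C P ar
  | ex : ℕ → Fml C P ar → Fml C P ar

/-- Tarskian satisfaction `I,v ⊨ F`. -/
def Fml.sat (cI : C → D) (pI : PredI P ar D) : Fml C P ar → (ℕ → D) → Prop
  | .atom p t, v => pI p (fun i => (t i).eval cI v)
  | .eq t₁ t₂, v => t₁.eval cI v = t₂.eval cI v
  | .bot, _ => False
  | .and F G, v => F.sat cI pI v ∧ G.sat cI pI v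
  | .or F G, v => F.sat cI pI v ∨ G.sat cI pI v
  | .imp F G, v => F.sat cI pI v → G.sat cI pI v
  | .all x F, v => ∀ d : D, F.sat cI pI (Function.update v x d)
  | .ex x F, v => ∃ d : D, F.sat cI pI (Function.update v x d)

/-- Satisfaction of a sentence (truth under every valuation). -/
def Fml.satSent (cI : C → D) (pI : PredI P ar D) (F : Fml C P ar) : Prop :=
  ∀ v : ℕ → D, F.sat cI pI v

/-- Satisfaction of `F*(u)` (atoms read via `uI`, the `F → G` clause also keeps `F → G`). -/
def Fml.satStar (cI : C → D) (pI uI : PredI P ar D) : Fml C P ar → (ℕ → D) → Prop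
  | .atom p t, v => uI p (fun i => (t i).eval cI v)
  | .eq t₁ t₂, v => t₁.eval cI v = t₂.eval cI v
  | .bot, _ => False
  | .and F G, v => F.satStar cI pI uI v ∧ G.satStar cI pI uI v
  | .or F G, v => F.satStar cI pI uI v ∨ G.satStar cI pI uI v
  | .imp F G, v => (F.satStar cI pI uI v → G.satStar cI pI uI v) ∧ (F.sat cI pI v → G.sat cI pI v)
  | .all x F, v => ∀ d : D, F.satStar cI pI uI (Function.update v x d)
  | .ex x F, v => ∃ d : D, F.satStar cI pI uI (Function.update v x d)

/-- `I ⊨ SM[F]` for a sentence `F`: `F ∧ ¬∃u((u < p) ∧ F*(u))`. -/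
def satSM (cI : C → D) (pI : PredI P ar D) (F : Fml C P ar) : Prop :=
  F.satSent cI pI ∧
    ¬ ∃ uI : PredI P ar D, PredI.lt uI pI ∧ ∀ v : ℕ → D, F.satStar cI pI uI v

/-- Satisfaction of `NES_F(u)`. -/
def Fml.satNES (cI : C → D) (pI uI : PredI P ar D) : Fml C P ar → (ℕ → D) → Prop
  | .atom p t, v => pI p (fun i => (t i).eval cI v) ∧ ¬ uI p (fun i => (t i).eval cI v)
  | .eq t₁ t₂, v => t₁.eval cI v = t₂.eval cI v
  | .bot, _ => False
  | .and F G, v => F.satNES cI pI uI v ∧ G.satNES cI pI uI v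
  | .or F G, v => F.satNES cI pI uI v ∨ G.satNES cI pI uI v
  | .imp F G, v => (F.satNES cI pI uI v → G.satNES cI pI uI v) ∧ (F.sat cI pI v → G.sat cI pI v)
  | .all x F, v => ∀ d : D, F.satNES cI pI uI (Function.update v x d)
  | .ex x F, v => ∃ d : D, F.satNES cI pI uI (Function.update v x d)

def Fml.freeVars : Fml C P ar → Set ℕ
  | .atom _ t => ⋃ i, (t i).vars
  | .eq t₁ t₂ => t₁.vars ∪ t₂.vars
  | .bot => ∅
  | .and F G => F.freeVars ∪ G.freeVars
  | .or F G => F.freeVars ∪ G.freeVars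
  | .imp F G => F.freeVars ∪ G.freeVars
  | .all x F => F.freeVars \ {x}
  | .ex x F => F.freeVars \ {x}

/-- The list of quantified (bound) variable occurrences, in order. -/
def Fml.quantVars : Fml C P ar → List ℕ
  | .atom _ _ => []
  | .eq _ _ => []
  | .bot => []
  | .and F G => F.quantVars ++ G.quantVars
  | .or F G => F.quantVars ++ G.quantVars
  | .imp F G => F.quantVars ++ G.quantVars
  | .all x F => x :: F.quantVars
  | .ex x F => x :: F.quantVars

/-- Rectified form: no variable is both bound and free, and quantifiers
are followed by pairwise distinct variables. -/
def Fml.rectified (F : Fml C P ar) : Prop :=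
  F.quantVars.Nodup ∧ ∀ x ∈ F.quantVars, x ∉ F.freeVars

def Fml.preds : Fml C P ar → Set P
  | .atom p _ => {p}
  | .eq _ _ => ∅
  | .bot => ∅
  | .and F G => F.preds ∪ G.preds
  | .or F G => F.preds ∪ G.preds
  | .imp F G => F.preds ∪ G.preds
  | .all _ F => F.preds
  | .ex _ F => F.preds

def Fml.consts : Fml C P ar → Set C
  | .atom _ t => ⋃ i, (t i).consts
  | .eq t₁ t₂ => t₁.consts ∪ t₂.consts
  | .bot => ∅
  | .and F G => F.consts ∪ G.consts
  | .or F G => F.consts ∪ G.consts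
  | .imp F G => F.consts ∪ G.consts
  | .all _ F => F.consts
  | .ex _ F => F.consts

/-- All (non-equality) atoms occurring in a formula. -/
def Fml.atomsOf : Fml C P ar → Set (Atom C P ar)
  | .atom p t => {⟨p, t⟩}
  | .eq _ _ => ∅
  | .bot => ∅
  | .and F G => F.atomsOf ∪ G.atomsOf
  | .or F G => F.atomsOf ∪ G.atomsOf
  | .imp F G => F.atomsOf ∪ G.atomsOf
  | .all _ F => F.atomsOf
  | .ex _ F => F.atomsOf

def Fml.isNegativeB : Fml C P ar → Bool
  | .atom _ _ => false
  | .eq _ _ => true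
  | .bot => true
  | .and F G => F.isNegativeB && G.isNegativeB
  | .or F G => F.isNegativeB && G.isNegativeB
  | .imp _ G => G.isNegativeB
  | .all _ F => F.isNegativeB
  | .ex _ F => F.isNegativeB

/-- A formula is negative if every occurrence of every predicate constant in it
belongs to the antecedent of an implication. -/
def Fml.isNegative (F : Fml C P ar) : Prop := F.isNegativeB = true

/-- Atoms with a strictly positive occurrence. -/
def Fml.spAtoms : Fml C P ar → Set (Atom C P ar)
  | .atom p t => {⟨p, t⟩}
  | .eq _ _ => ∅
  | .bot => ∅
  | .and F G => F.spAtoms ∪ G.spAtoms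
  | .or F G => F.spAtoms ∪ G.spAtoms
  | .imp _ G => G.spAtoms
  | .all _ F => F.spAtoms
  | .ex _ F => F.spAtoms

/-- Implications `G → H` with a strictly positive occurrence. -/
def Fml.spImps : Fml C P ar → Set (Fml C P ar × Fml C P ar)
  | .atom _ _ => ∅
  | .eq _ _ => ∅
  | .bot => ∅
  | .and F G => F.spImps ∪ G.spImps
  | .or F G => F.spImps ∪ G.spImps
  | .imp F G => insert (F, G) G.spImps
  | .all _ F => F.spImps
  | .ex _ F => F.spImps

/-- Atoms with an occurrence of polarity `b` (`true` = positive) that does not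
belong to any occurrence of a negative subformula. -/
def Fml.polNN : Bool → Fml C P ar → Set (Atom C P ar)
  | true, .atom p t => {⟨p, t⟩}
  | false, .atom _ _ => ∅
  | _, .eq _ _ => ∅
  | _, .bot => ∅
  | b, .and F G =>
      if (Fml.and F G).isNegativeB then ∅ else Fml.polNN b F ∪ Fml.polNN b G
  | b, .or F G =>
      if (Fml.or F G).isNegativeB then ∅ else Fml.polNN b F ∪ Fml.polNN b G
  | b, .imp F G =>
      if (Fml.imp F G).isNegativeB then ∅ else Fml.polNN (!b) F ∪ Fml.polNN b G
  | b, .all x F => if (Fml.all x F).isNegativeB then ∅ else Fml.polNN b F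
  | b, .ex x F => if (Fml.ex x F).isNegativeB then ∅ else Fml.polNN b F

/-- `a` depends on `b` in `F`: `a` weakly depends on `b` in an implication that has a
strictly positive occurrence in `F`. -/
def Fml.depends (F : Fml C P ar) (a b : Atom C P ar) : Prop :=
  ∃ GH ∈ F.spImps, a ∈ (Prod.snd GH).spAtoms ∧ b ∈ Fml.polNN true (Prod.fst GH)

/-- `E_F(v,u)`. -/
def satE (cI : C → D) (F : Fml C P ar) (vI uI : PredI P ar D) : Prop :=
  ∃ a b : Atom C P ar, F.depends a b ∧ ∃ θ : ℕ → D,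
    vI a.1 (fun i => (a.2 i).eval cI θ) ∧ uI b.1 (fun i => (b.2 i).eval cI θ) ∧
      ¬ vI b.1 (fun i => (b.2 i).eval cI θ)

/-- `SC_F(u)` : Nonempty(u) ∧ ∀v((v < u) ∧ Nonempty(v) → E_F(v,u)). -/
def satSC (cI : C → D) (F : Fml C P ar) (uI : PredI P ar D) : Prop :=
  PredI.nonemp uI ∧
    ∀ vI : PredI P ar D, PredI.lt vI uI → PredI.nonemp vI → satE cI F vI uI

/-- `Loop_F(u)` : SC_F(u) ∨ (Nonempty(u) ∧ ∀v((v ≤ u) ∧ SC_F(v) → E_F(v,u))). -/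
def satLoopF (cI : C → D) (F : Fml C P ar) (uI : PredI P ar D) : Prop :=
  satSC cI F uI ∨ (PredI.nonemp uI ∧
    ∀ vI : PredI P ar D, PredI.le vI uI → satSC cI F vI → satE cI F vI uI)

/-- Semantic atoms `pᵢ(ξ⃗*)`, where `ξ⃗` is a tuple of universe elements. -/
abbrev SAtom (P : Type) (ar : P → ℕ) (D : Type) := Σ p : P, Fin (ar p) → D

/-- Edges of the dependency graph of `F` w.r.t. an interpretation. -/
def edgeWrt (cI : C → D) (F : Fml C P ar) (a b : SAtom P ar D) : Prop :=
  ∃ a0 b0 : Atom C P ar, F.depends a0 b0 ∧ ∃ θ : ℕ → D,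
    (⟨a0.1, fun i => (a0.2 i).eval cI θ⟩ : SAtom P ar D) = a ∧
    (⟨b0.1, fun i => (b0.2 i).eval cI θ⟩ : SAtom P ar D) = b

/-- The subgraph induced by `Y` is strongly connected. -/
def SCin {V : Type} (E : V → V → Prop) (Y : Set V) : Prop :=
  ∀ a ∈ Y, ∀ b ∈ Y, Relation.ReflTransGen (fun x y => x ∈ Y ∧ y ∈ Y ∧ E x y) a b

/-- A loop of `F` w.r.t. `I`: nonempty (possibly infinite) set of semantic atoms
inducing a strongly connected subgraph of the dependency graph of `F` w.r.t. `I`. -/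
def isLoopWrt (cI : C → D) (F : Fml C P ar) (Y : Set (SAtom P ar D)) : Prop :=
  Y.Nonempty ∧ SCin (edgeWrt cI F) Y

/-- An unbounded set of `F` w.r.t. `I`. -/
def isUnboundedWrt (cI : C → D) (F : Fml C P ar) (Y : Set (SAtom P ar D)) : Prop :=
  Y.Nonempty ∧ ∀ Z ⊆ Y, Z.Nonempty → SCin (edgeWrt cI F) Z →
    ∃ a ∈ Z, ∃ b ∈ Y \ Z, edgeWrt cI F a b

/-- An extended loop of `F` w.r.t. `I`: a loop or an unbounded set. -/
def isExtLoopWrt (cI : C → D) (F : Fml C P ar) (Y : Set (SAtom P ar D)) : Prop :=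
  isLoopWrt cI F Y ∨ isUnboundedWrt cI F Y

/-- Edges of the first-order dependency graph of `F`. -/
def foEdge (F : Fml C P ar) (a b : Atom C P ar) : Prop :=
  ∃ a0 b0 : Atom C P ar, F.depends a0 b0 ∧ ∃ θ : ℕ → Term C,
    a0.subst θ = a ∧ b0.subst θ = b

/-- A first-order loop of `F`. -/
def isFOLoop (F : Fml C P ar) (Y : Set (Atom C P ar)) : Prop :=
  Y.Finite ∧ Y.Nonempty ∧ SCin (foEdge F) Y

/-- Normal form: no object constants occur in strictly positive occurrences of atoms. -/
def Fml.normalForm (F : Fml C P ar) : Prop :=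
  ∀ a ∈ F.spAtoms, ∀ i, (a.2 i).isVar

/-- `Y₁` subsumes `Y₂`. -/
def subsumes (Y₁ Y₂ : Set (Atom C P ar)) : Prop :=
  ∃ θ : ℕ → Term C, Atom.subst θ '' Y₁ = Y₂

/-- Satisfaction of `NFES_F(Y)`; the terms of the atoms in `Y` are evaluated under the
outer valuation `w` (implementing the renaming of the bound variables of `F` apart
from `Y`), the terms of `F` under the current valuation `v`. -/
def Fml.satNFES (cI : C → D) (pI : PredI P ar D) (Y : Set (Atom C P ar)) (w : ℕ → D) :
    Fml C P ar → (ℕ → D) → Prop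
  | .atom p t, v => pI p (fun i => (t i).eval cI v) ∧
      ∀ t' : Fin (ar p) → Term C, (⟨p, t'⟩ : Atom C P ar) ∈ Y →
        ¬ ∀ i, (t i).eval cI v = (t' i).eval cI w
  | .eq t₁ t₂, v => t₁.eval cI v = t₂.eval cI v
  | .bot, _ => False
  | .and F G, v => F.satNFES cI pI Y w v ∧ G.satNFES cI pI Y w v
  | .or F G, v => F.satNFES cI pI Y w v ∨ G.satNFES cI pI Y w v
  | .imp F G, v =>
      (F.satNFES cI pI Y w v → G.satNFES cI pI Y w v) ∧ (F.sat cI pI v → G.sat cI pI v)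
  | .all x F, v => ∀ d : D, F.satNFES cI pI Y w (Function.update v x d)
  | .ex x F, v => ∃ d : D, F.satNFES cI pI Y w (Function.update v x d)

/-- Truth of an atom of `Y` under valuation `w`. -/
def Atom.holds (cI : C → D) (pI : PredI P ar D) (w : ℕ → D) (a : Atom C P ar) : Prop :=
  pI a.1 (fun i => (a.2 i).eval cI w)

/-- `I ⊨ FLF_F(Y)` : the universal closure (over the variables of `Y`) of
`⋀Y → ¬NFES_F(Y)`. -/
def satFLF (cI : C → D) (pI : PredI P ar D) (F : Fml C P ar) (Y : Set (Atom C P ar)) : Prop :=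
  ∀ w : ℕ → D, (∀ a ∈ Y, a.holds cI pI w) → ¬ F.satNFES cI pI Y w w

/-- Restricted variables `RV(F)`. -/
def Fml.RV : Fml C P ar → Set ℕ
  | .atom _ t => ⋃ i, (t i).vars
  | .eq (.var _) (.var _) => ∅
  | .eq t₁ t₂ => t₁.vars ∪ t₂.vars
  | .bot => ∅
  | .and F G => F.RV ∪ G.RV
  | .or F G => F.RV ∩ G.RV
  | .imp _ _ => ∅
  | .all x F => F.RV \ {x}
  | .ex x F => F.RV \ {x}

/-- The unsafe variables of `F`: variables with an occurrence not in `∀x`, `∃x`, nor in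
any subformula `G → H` with `x ∈ RV(G)`. -/
def Fml.unsafeVars : Fml C P ar → Set ℕ
  | .atom _ t => ⋃ i, (t i).vars
  | .eq t₁ t₂ => t₁.vars ∪ t₂.vars
  | .bot => ∅
  | .and F G => F.unsafeVars ∪ G.unsafeVars
  | .or F G => F.unsafeVars ∪ G.unsafeVars
  | .imp F G => (F.unsafeVars ∪ G.unsafeVars) \ F.RV
  | .all _ F => F.unsafeVars
  | .ex _ F => F.unsafeVars

/-- `I ⊨ U_F`. -/
def satU (cI : C → D) (pI : PredI P ar D) (F : Fml C P ar) : Prop :=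
  ∀ p : P, ∀ xs : Fin (ar p) → D, pI p xs → ∀ i, ∃ c ∈ F.consts, xs i = cI c

/-! ### Logic programs -/

def Term.varList : Term C → List ℕ
  | .var x => [x]
  | .const _ => []

def Fml.freeList : Fml C P ar → List ℕ
  | .atom p t => (List.finRange (ar p)).foldr (fun i l => (t i).varList ++ l) []
  | .eq t₁ t₂ => t₁.varList ++ t₂.varList
  | .bot => []
  | .and F G => F.freeList ++ G.freeList
  | .or F G => F.freeList ++ G.freeList
  | .imp F G => F.freeList ++ G.freeList
  | .all x F => F.freeList.filter (· ≠ x)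
  | .ex x F => F.freeList.filter (· ≠ x)

/-- Universal closure. -/
def Fml.closure (F : Fml C P ar) : Fml C P ar := F.freeList.foldr Fml.all F

def Fml.top : Fml C P ar := Fml.imp Fml.bot Fml.bot

def Atom.toFml (a : Atom C P ar) : Fml C P ar := Fml.atom a.1 a.2

/-- A nondisjunctive rule `A ← B, N` (`N` is required to be a negative formula
in the statements below). -/
structure NRule (C P : Type) (ar : P → ℕ) where
  head : Atom C P ar
  body : List (Atom C P ar)
  neg : Fml C P ar

/-- A nondisjunctive program. -/
abbrev NProg (C P : Type) (ar : P → ℕ) := List (NRule C P ar)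

def NRule.toFml (r : NRule C P ar) : Fml C P ar :=
  Fml.imp (r.body.foldr (fun a G => (Atom.toFml a).and G) r.neg) (Atom.toFml r.head)

/-- FOL-representation of a nondisjunctive program. -/
def NProg.toFml (Pr : NProg C P ar) : Fml C P ar :=
  Pr.foldr (fun r G => (Fml.closure (NRule.toFml r)).and G) Fml.top

/-- Terms occurring in `Y`. -/
def termsOf (Y : Set (Atom C P ar)) : Set (Term C) := {t | ∃ a ∈ Y, ∃ i, a.2 i = t}

def NRule.headVars (r : NRule C P ar) : Set ℕ := Atom.vars r.head

/-- One disjunct of `FES_Π(Y)`, evaluated under the valuation `w` of the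
variables of `Y` (the variables of the rule are implicitly renamed apart from `Y`:
they are interpreted by the existential valuation `s`, while terms of `Y` and the
`θ`-images of head variables are evaluated under `w`). -/
def NRule.FES (cI : C → D) (pI : PredI P ar D) (r : NRule C P ar)
    (Y : Set (Atom C P ar)) (w : ℕ → D) : Prop :=
  ∃ θ : ℕ → Option (Term C),
    (∀ x ∈ NRule.headVars r, ∃ t ∈ termsOf Y, θ x = some t) ∧
    (∀ x, x ∉ NRule.headVars r → θ x = none) ∧
    Atom.subst (fun x => (θ x).getD (Term.var x)) r.head ∈ Y ∧
    ∃ s : ℕ → D,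
      let v : ℕ → D := fun x => match θ x with
        | some t => t.eval cI w
        | none => s x
      (∀ b ∈ r.body, pI b.1 (fun i => (b.2 i).eval cI v)) ∧
      (NRule.neg r).sat cI pI v ∧
      (∀ b ∈ r.body, ∀ t' : Fin (ar b.1) → Term C, (⟨b.1, t'⟩ : Atom C P ar) ∈ Y →
        ¬ ∀ i, (b.2 i).eval cI v = (t' i).eval cI w)

/-- `FES_Π(Y)` under valuation `w`. -/
def NProg.FES (cI : C → D) (pI : PredI P ar D) (Pr : NProg C P ar)
    (Y : Set (Atom C P ar)) (w : ℕ → D) : Prop :=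
  ∃ r ∈ Pr, NRule.FES cI pI r Y w

/-- `I ⊨ FLF_Π(Y)`. -/
def NProg.satFLF (cI : C → D) (pI : PredI P ar D) (Pr : NProg C P ar)
    (Y : Set (Atom C P ar)) : Prop :=
  ∀ w : ℕ → D, (∀ a ∈ Y, Atom.holds cI pI w a) → NProg.FES cI pI Pr Y w

/-- `p(t)` depends on `q(t')` in the program `Pr`. -/
def NProg.depends (Pr : NProg C P ar) (a b : Atom C P ar) : Prop :=
  ∃ r ∈ Pr, NRule.head r = a ∧ b ∈ NRule.body r

/-- Edges of the first-order dependency graph of a nondisjunctive program. -/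
def NProg.foEdge (Pr : NProg C P ar) (a b : Atom C P ar) : Prop :=
  ∃ a0 b0 : Atom C P ar, NProg.depends Pr a0 b0 ∧ ∃ θ : ℕ → Term C,
    a0.subst θ = a ∧ b0.subst θ = b

/-- First-order loops of a nondisjunctive program. -/
def NProg.isFOLoop (Pr : NProg C P ar) (Y : Set (Atom C P ar)) : Prop :=
  Y.Finite ∧ Y.Nonempty ∧ SCin (NProg.foEdge Pr) Y

/-! ### Grounding (Herbrand universe `C`, constants denote themselves) -/

/-- Ground atoms of `σ(Π)^g`. -/
abbrev GAtom (C P : Type) (ar : P → ℕ) := Σ p : P, Fin (ar p) → C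

/-- The ground instance of an atom under an assignment of constants to variables. -/
def Atom.ground (v : ℕ → C) (a : Atom C P ar) : GAtom C P ar :=
  ⟨a.1, fun i => (a.2 i).eval id v⟩

/-- `I ⊨ LF_{Ground(Π)}(Y)` for a set `Y` of ground atoms and an Herbrand
interpretation given by `pI`. -/
def NProg.satLFg (pI : PredI P ar C) (Pr : NProg C P ar) (Y : Set (GAtom C P ar)) : Prop :=
  (∀ a ∈ Y, pI a.1 a.2) → ∃ r ∈ Pr, ∃ v : ℕ → C,
    Atom.ground v (NRule.head r) ∈ Y ∧
    (∀ b ∈ NRule.body r, Atom.ground v b ∉ Y) ∧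
    (∀ b ∈ NRule.body r, pI b.1 (fun i => (b.2 i).eval id v)) ∧
    (NRule.neg r).sat id pI v

/-- Edges of the dependency graph of `Ground(Π)`. -/
def NProg.gEdge (Pr : NProg C P ar) (a b : GAtom C P ar) : Prop :=
  ∃ r ∈ Pr, ∃ v : ℕ → C,
    Atom.ground v (NRule.head r) = a ∧ ∃ b0 ∈ NRule.body r, Atom.ground v b0 = b

/-- Loops of `Ground(Π)`. -/
def NProg.gLoop (Pr : NProg C P ar) (Y : Set (GAtom C P ar)) : Prop :=
  Y.Nonempty ∧ SCin (NProg.gEdge Pr) Y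

/-- A ground atom occurs in `Ground(Π)`. -/
def NProg.occursInGround (Pr : NProg C P ar) (a : GAtom C P ar) : Prop :=
  ∃ r ∈ Pr, ∃ v : ℕ → C,
    Atom.ground v (NRule.head r) = a ∨ (∃ b ∈ NRule.body r, Atom.ground v b = a) ∨
      ∃ a0 ∈ (NRule.neg r).atomsOf, Atom.ground v a0 = a

/-! ### Disjunctive programs -/

/-- A disjunctive rule `A ← B, N`. -/
structure DRule (C P : Type) (ar : P → ℕ) where
  head : List (Atom C P ar)
  body : List (Atom C P ar)
  neg : Fml C P ar

abbrev DProg (C P : Type) (ar : P → ℕ) := List (DRule C P ar)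

def DRule.toFml (r : DRule C P ar) : Fml C P ar :=
  Fml.imp (r.body.foldr (fun a G => (Atom.toFml a).and G) r.neg)
    (r.head.foldr (fun a G => (Atom.toFml a).or G) Fml.bot)

def DProg.toFml (Pr : DProg C P ar) : Fml C P ar :=
  Pr.foldr (fun r G => (Fml.closure (DRule.toFml r)).and G) Fml.top

def DRule.headVars (r : DRule C P ar) : Set ℕ :=
  {x | ∃ a ∈ r.head, ∃ i, a.2 i = Term.var x}

/-- One disjunct of the disjunctive `FES_Π(Y)` under valuation `w`
(`θ x = none` means `θ` maps `x` to itself). -/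
def DRule.FES (cI : C → D) (pI : PredI P ar D) (r : DRule C P ar)
    (Y : Set (Atom C P ar)) (w : ℕ → D) : Prop :=
  ∃ θ : ℕ → Option (Term C),
    (∀ x t, θ x = some t → x ∈ DRule.headVars r ∧ t ∈ termsOf Y) ∧
    (∃ a ∈ r.head, Atom.subst (fun x => (θ x).getD (Term.var x)) a ∈ Y) ∧
    ∃ s : ℕ → D,
      let v : ℕ → D := fun x => match θ x with
        | some t => t.eval cI w
        | none => s x
      (∀ b ∈ r.body, pI b.1 (fun i => (b.2 i).eval cI v)) ∧
      (DRule.neg r).sat cI pI v ∧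
      (∀ b ∈ r.body, ∀ t' : Fin (ar b.1) → Term C, (⟨b.1, t'⟩ : Atom C P ar) ∈ Y →
        ¬ ∀ i, (b.2 i).eval cI v = (t' i).eval cI w) ∧
      ¬ ∃ a ∈ r.head, pI a.1 (fun i => (a.2 i).eval cI v) ∧
          ∀ t' : Fin (ar a.1) → Term C, (⟨a.1, t'⟩ : Atom C P ar) ∈ Y →
            ¬ ∀ i, (a.2 i).eval cI v = (t' i).eval cI w

def DProg.FES (cI : C → D) (pI : PredI P ar D) (Pr : DProg C P ar)
    (Y : Set (Atom C P ar)) (w : ℕ → D) : Prop :=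
  ∃ r ∈ Pr, DRule.FES cI pI r Y w

/-! ### Extended programs -/

/-- Every occurrence of an implication belongs to (an occurrence of) a negative formula. -/
def Fml.impsProtected : Fml C P ar → Prop
  | .atom _ _ => True
  | .eq _ _ => True
  | .bot => True
  | .and F G => (Fml.and F G).isNegative ∨ (F.impsProtected ∧ G.impsProtected)
  | .or F G => (Fml.or F G).isNegative ∨ (F.impsProtected ∧ G.impsProtected)
  | .imp F G => (Fml.imp F G).isNegative
  | .all x F => (Fml.all x F).isNegative ∨ F.impsProtected
  | .ex x F => (Fml.ex x F).isNegative ∨ F.impsProtected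

/-- An extended rule `H ← G`. -/
structure ERule (C P : Type) (ar : P → ℕ) where
  head : Fml C P ar
  body : Fml C P ar

abbrev EProg (C P : Type) (ar : P → ℕ) := List (ERule C P ar)

def ERule.toFml (r : ERule C P ar) : Fml C P ar := Fml.imp r.body r.head

def EProg.toFml (Pr : EProg C P ar) : Fml C P ar :=
  Pr.foldr (fun r G => (Fml.closure (ERule.toFml r)).and G) Fml.top

/-- One disjunct of `EFES_Π(Y)` under valuation `w`: the rule head contains a strictly
positive occurrence of a predicate constant occurring in an atom of `Y`, and
`∃z(NFES_G(Y) ∧ ¬NFES_H(Y))`. -/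
def ERule.EFES (cI : C → D) (pI : PredI P ar D) (r : ERule C P ar)
    (Y : Set (Atom C P ar)) (w : ℕ → D) : Prop :=
  (∃ p : P, (∃ t, (⟨p, t⟩ : Atom C P ar) ∈ (ERule.head r).spAtoms) ∧
      ∃ t', (⟨p, t'⟩ : Atom C P ar) ∈ Y) ∧
  ∃ s : ℕ → D, (ERule.body r).satNFES cI pI Y w s ∧ ¬ (ERule.head r).satNFES cI pI Y w s

def EProg.EFES (cI : C → D) (pI : PredI P ar D) (Pr : EProg C P ar)
    (Y : Set (Atom C P ar)) (w : ℕ → D) : Prop :=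
  ∃ r ∈ Pr, ERule.EFES cI pI r Y w

/-- A disjunctive rule viewed as an extended rule. -/
def DRule.toERule (r : DRule C P ar) : ERule C P ar :=
  ⟨r.head.foldr (fun a G => (Atom.toFml a).or G) Fml.bot,
   r.body.foldr (fun a G => (Atom.toFml a).and G) r.neg⟩


/-! ### Propositional formulas -/

namespace Prp

inductive PFml (A : Type) where
  | atom : A → PFml A
  | bot : PFml A
  | and : PFml A → PFml A → PFml A
  | or : PFml A → PFml A → PFml A
  | imp : PFml A → PFml A → PFml A

variable {A : Type}

def PFml.sat (V : A → Prop) : PFml A → Prop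
  | .atom a => V a
  | .bot => False
  | .and F G => F.sat V ∧ G.sat V
  | .or F G => F.sat V ∨ G.sat V
  | .imp F G => F.sat V → G.sat V

def PFml.satStar (V U : A → Prop) : PFml A → Prop
  | .atom a => U a
  | .bot => False
  | .and F G => F.satStar V U ∧ G.satStar V U
  | .or F G => F.satStar V U ∨ G.satStar V U
  | .imp F G => (F.satStar V U → G.satStar V U) ∧ (F.sat V → G.sat V)

def PFml.satNES (V U : A → Prop) : PFml A → Prop
  | .atom a => V a ∧ ¬ U a
  | .bot => False
  | .and F G => F.satNES V U ∧ G.satNES V U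
  | .or F G => F.satNES V U ∨ G.satNES V U
  | .imp F G => (F.satNES V U → G.satNES V U) ∧ (F.sat V → G.sat V)

def PFml.atoms : PFml A → Set A
  | .atom a => {a}
  | .bot => ∅
  | .and F G => F.atoms ∪ G.atoms
  | .or F G => F.atoms ∪ G.atoms
  | .imp F G => F.atoms ∪ G.atoms

/-- `V ⊨ SM[F]` : `F ∧ ¬∃u((u < p) ∧ F*(u))`. -/
def satSM (V : A → Prop) (F : PFml A) : Prop :=
  F.sat V ∧ ¬ ∃ U : A → Prop,
    ((∀ a, U a → V a) ∧ ¬ (∀ a, U a ↔ V a)) ∧ F.satStar V U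

def PFml.isNegativeB : PFml A → Bool
  | .atom _ => false
  | .bot => true
  | .and F G => F.isNegativeB && G.isNegativeB
  | .or F G => F.isNegativeB && G.isNegativeB
  | .imp _ G => G.isNegativeB

def PFml.spAtoms : PFml A → Set A
  | .atom a => {a}
  | .bot => ∅
  | .and F G => F.spAtoms ∪ G.spAtoms
  | .or F G => F.spAtoms ∪ G.spAtoms
  | .imp _ G => G.spAtoms

def PFml.spImps : PFml A → Set (PFml A × PFml A)
  | .atom _ => ∅
  | .bot => ∅
  | .and F G => F.spImps ∪ G.spImps
  | .or F G => F.spImps ∪ G.spImps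
  | .imp F G => insert (F, G) G.spImps

/-- Atoms with an occurrence of polarity `b` not belonging to any negative subformula. -/
def PFml.polNN : Bool → PFml A → Set A
  | true, .atom a => {a}
  | false, .atom _ => ∅
  | _, .bot => ∅
  | b, .and F G => if (PFml.and F G).isNegativeB then ∅ else PFml.polNN b F ∪ PFml.polNN b G
  | b, .or F G => if (PFml.or F G).isNegativeB then ∅ else PFml.polNN b F ∪ PFml.polNN b G
  | b, .imp F G => if (PFml.imp F G).isNegativeB then ∅ else PFml.polNN (!b) F ∪ PFml.polNN b G

/-- `a` depends on `b` in `F`. -/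
def PFml.depends (F : PFml A) (a b : A) : Prop :=
  ∃ GH ∈ F.spImps, a ∈ (Prod.snd GH).spAtoms ∧ b ∈ PFml.polNN true (Prod.fst GH)

/-- A loop of `F`: a nonempty set of atoms of `F` inducing a strongly connected
subgraph of the dependency graph of `F`. -/
def PFml.isLoop (F : PFml A) (Y : Set A) : Prop :=
  Y.Nonempty ∧ Y ⊆ F.atoms ∧ SMLF.SCin F.depends Y


section Aux

variable {A : Type}

open Classical in
lemma satNES_sat {V U : A → Prop} : ∀ {F : PFml A}, F.satNES V U → F.sat V := by
  intro F
  induction F with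
  | atom a => exact fun h => h.1
  | bot => exact id
  | and F G ihF ihG => exact fun h => ⟨ihF h.1, ihG h.2⟩
  | or F G ihF ihG => exact fun h => h.elim (fun h => Or.inl (ihF h)) (fun h => Or.inr (ihG h))
  | imp F G ihF ihG => exact fun h => h.2

lemma satNES_of_neg {V U : A → Prop} :
    ∀ {F : PFml A}, F.isNegativeB = true → (F.satNES V U ↔ F.sat V) := by
  intro F
  induction F with
  | atom a => simp [PFml.isNegativeB]
  | bot => simp [PFml.satNES, PFml.sat]
  | and F G ihF ihG =>
    intro h
    simp only [PFml.isNegativeB, Bool.and_eq_true] at h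
    simp [PFml.satNES, PFml.sat, ihF h.1, ihG h.2]
  | or F G ihF ihG =>
    intro h
    simp only [PFml.isNegativeB, Bool.and_eq_true] at h
    simp [PFml.satNES, PFml.sat, ihF h.1, ihG h.2]
  | imp F G ihF ihG =>
    intro h
    simp only [PFml.isNegativeB] at h
    constructor
    · exact fun hh => hh.2
    · intro hs
      exact ⟨fun hF => (ihG h).2 (hs (satNES_sat hF)), hs⟩

lemma satStar_congr {V U U' : A → Prop} (h : ∀ a, U a ↔ U' a) :
    ∀ (F : PFml A), F.satStar V U ↔ F.satStar V U' := by
  intro F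
  induction F with
  | atom a => exact h a
  | bot => exact Iff.rfl
  | and F G ihF ihG => exact and_congr ihF ihG
  | or F G ihF ihG => exact or_congr ihF ihG
  | imp F G ihF ihG => exact and_congr (imp_congr ihF ihG) Iff.rfl

lemma satNES_iff_satStar {V U : A → Prop} :
    ∀ (F : PFml A), F.satNES V U ↔ F.satStar V (fun a => V a ∧ ¬ U a) := by
  intro F
  induction F with
  | atom a => exact Iff.rfl
  | bot => exact Iff.rfl
  | and F G ihF ihG => exact and_congr ihF ihG
  | or F G ihF ihG => exact or_congr ihF ihG
  | imp F G ihF ihG => exact and_congr (imp_congr ihF ihG) Iff.rfl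

lemma satNES_of_spAtoms {V : A → Prop} {Z : Set A} :
    ∀ {F : PFml A}, F.sat V → (∀ a ∈ F.spAtoms, a ∉ Z) → F.satNES V (· ∈ Z) := by
  intro F
  induction F with
  | atom a => exact fun h hsp => ⟨h, hsp a rfl⟩
  | bot => exact fun h _ => h
  | and F G ihF ihG =>
    exact fun h hsp => ⟨ihF h.1 (fun a ha => hsp a (Or.inl ha)),
      ihG h.2 (fun a ha => hsp a (Or.inr ha))⟩
  | or F G ihF ihG =>
    exact fun h hsp => h.elim
      (fun h => Or.inl (ihF h (fun a ha => hsp a (Or.inl ha))))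
      (fun h => Or.inr (ihG h (fun a ha => hsp a (Or.inr ha))))
  | imp F G ihF ihG =>
    exact fun h hsp => ⟨fun hF => ihG (h (satNES_sat hF)) hsp, h⟩

lemma polNN_lemma {V : A → Prop} {Z Y : Set A} (hZY : Z ⊆ Y) :
    ∀ (F : PFml A),
      (F.satNES V (· ∈ Z) → ¬ F.satNES V (· ∈ Y) → ∃ x ∈ Y, x ∉ Z ∧ x ∈ F.polNN true) ∧
      (F.satNES V (· ∈ Y) → ¬ F.satNES V (· ∈ Z) → ∃ x ∈ Y, x ∉ Z ∧ x ∈ F.polNN false) := by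
  intro F
  induction F with
  | atom a =>
    constructor
    · intro hZ hY
      by_cases haY : a ∈ Y
      · exact ⟨a, haY, hZ.2, rfl⟩
      · exact absurd ⟨hZ.1, haY⟩ hY
    · intro hYn hZn
      exact absurd ⟨hYn.1, fun h => hYn.2 (hZY h)⟩ hZn
  | bot => exact ⟨fun h => absurd h (fun h => h), fun h => absurd h (fun h => h)⟩
  | and F G ihF ihG =>
    by_cases hneg : (PFml.and F G).isNegativeB
    · exact ⟨fun hZ hY => absurd ((satNES_of_neg hneg).2 ((satNES_of_neg hneg).1 hZ)) hY,
        fun hYn hZn => absurd ((satNES_of_neg hneg).2 ((satNES_of_neg hneg).1 hYn)) hZn⟩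
    · constructor
      · intro hZ hY
        have : ¬ F.satNES V (· ∈ Y) ∨ ¬ G.satNES V (· ∈ Y) := by
          by_contra h; push_neg at h; exact hY ⟨h.1, h.2⟩
        rcases this with h | h
        · obtain ⟨x, hx1, hx2, hx3⟩ := ihF.1 hZ.1 h
          exact ⟨x, hx1, hx2, by simp [PFml.polNN, hneg, hx3]⟩
        · obtain ⟨x, hx1, hx2, hx3⟩ := ihG.1 hZ.2 h
          exact ⟨x, hx1, hx2, by simp [PFml.polNN, hneg, hx3]⟩
      · intro hYn hZn
        have : ¬ F.satNES V (· ∈ Z) ∨ ¬ G.satNES V (· ∈ Z) := by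
          by_contra h; push_neg at h; exact hZn ⟨h.1, h.2⟩
        rcases this with h | h
        · obtain ⟨x, hx1, hx2, hx3⟩ := ihF.2 hYn.1 h
          exact ⟨x, hx1, hx2, by simp [PFml.polNN, hneg, hx3]⟩
        · obtain ⟨x, hx1, hx2, hx3⟩ := ihG.2 hYn.2 h
          exact ⟨x, hx1, hx2, by simp [PFml.polNN, hneg, hx3]⟩
  | or F G ihF ihG =>
    by_cases hneg : (PFml.or F G).isNegativeB
    · exact ⟨fun hZ hY => absurd ((satNES_of_neg hneg).2 ((satNES_of_neg hneg).1 hZ)) hY,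
        fun hYn hZn => absurd ((satNES_of_neg hneg).2 ((satNES_of_neg hneg).1 hYn)) hZn⟩
    · constructor
      · intro hZ hY
        have hYs : ¬ F.satNES V (· ∈ Y) ∧ ¬ G.satNES V (· ∈ Y) := by
          constructor <;> intro h
          · exact hY (Or.inl h)
          · exact hY (Or.inr h)
        rcases hZ with h | h
        · obtain ⟨x, hx1, hx2, hx3⟩ := ihF.1 h hYs.1
          exact ⟨x, hx1, hx2, by simp [PFml.polNN, hneg, hx3]⟩
        · obtain ⟨x, hx1, hx2, hx3⟩ := ihG.1 h hYs.2
          exact ⟨x, hx1, hx2, by simp [PFml.polNN, hneg, hx3]⟩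
      · intro hYn hZn
        have hZs : ¬ F.satNES V (· ∈ Z) ∧ ¬ G.satNES V (· ∈ Z) := by
          constructor <;> intro h
          · exact hZn (Or.inl h)
          · exact hZn (Or.inr h)
        rcases hYn with h | h
        · obtain ⟨x, hx1, hx2, hx3⟩ := ihF.2 h hZs.1
          exact ⟨x, hx1, hx2, by simp [PFml.polNN, hneg, hx3]⟩
        · obtain ⟨x, hx1, hx2, hx3⟩ := ihG.2 h hZs.2
          exact ⟨x, hx1, hx2, by simp [PFml.polNN, hneg, hx3]⟩
  | imp F G ihF ihG =>
    by_cases hneg : (PFml.imp F G).isNegativeB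
    · exact ⟨fun hZ hY => absurd ((satNES_of_neg hneg).2 ((satNES_of_neg hneg).1 hZ)) hY,
        fun hYn hZn => absurd ((satNES_of_neg hneg).2 ((satNES_of_neg hneg).1 hYn)) hZn⟩
    · constructor
      · intro hZ hY
        have hY1 : F.satNES V (· ∈ Y) ∧ ¬ G.satNES V (· ∈ Y) := by
          by_contra h; push_neg at h
          refine hY ⟨?_, hZ.2⟩
          intro hF
          by_cases hG : G.satNES V (· ∈ Y)
          · exact hG
          · exact absurd (h hF) hG
        by_cases hGZ : G.satNES V (· ∈ Z)
        · obtain ⟨x, hx1, hx2, hx3⟩ := ihG.1 hGZ hY1.2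
          exact ⟨x, hx1, hx2, by simp [PFml.polNN, hneg, hx3]⟩
        · have hFZ : ¬ F.satNES V (· ∈ Z) := fun h => hGZ (hZ.1 h)
          obtain ⟨x, hx1, hx2, hx3⟩ := ihF.2 hY1.1 hFZ
          exact ⟨x, hx1, hx2, by simp [PFml.polNN, hneg, hx3]⟩
      · intro hYn hZn
        have hZ1 : F.satNES V (· ∈ Z) ∧ ¬ G.satNES V (· ∈ Z) := by
          by_contra h; push_neg at h
          refine hZn ⟨?_, hYn.2⟩
          intro hF
          by_cases hG : G.satNES V (· ∈ Z)
          · exact hG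
          · exact absurd (h hF) hG
        by_cases hFY : F.satNES V (· ∈ Y)
        · obtain ⟨x, hx1, hx2, hx3⟩ := ihG.2 (hYn.1 hFY) hZ1.2
          exact ⟨x, hx1, hx2, by simp [PFml.polNN, hneg, hx3]⟩
        · obtain ⟨x, hx1, hx2, hx3⟩ := ihF.1 hZ1.1 hFY
          exact ⟨x, hx1, hx2, by simp [PFml.polNN, hneg, hx3]⟩

lemma shrink {V : A → Prop} {Z Y : Set A} (hZY : Z ⊆ Y) (F : PFml A)
    (hdep : ∀ a ∈ Z, ∀ b ∈ Y, b ∉ Z → ¬ F.depends a b) :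
    ∀ (G : PFml A), G.spImps ⊆ F.spImps → G.satNES V (· ∈ Y) → G.satNES V (· ∈ Z) := by
  intro G
  induction G with
  | atom a => exact fun _ h => ⟨h.1, fun hz => h.2 (hZY hz)⟩
  | bot => exact fun _ h => h
  | and B H ihB ihH =>
    intro hsp h
    exact ⟨ihB (fun x hx => hsp (Or.inl hx)) h.1, ihH (fun x hx => hsp (Or.inr hx)) h.2⟩
  | or B H ihB ihH =>
    intro hsp h
    exact h.elim (fun h => Or.inl (ihB (fun x hx => hsp (Or.inl hx)) h))
      (fun h => Or.inr (ihH (fun x hx => hsp (Or.inr hx)) h))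
  | imp B H ihB ihH =>
    intro hsp h
    have hspH : H.spImps ⊆ F.spImps := fun x hx => hsp (Set.mem_insert_iff.2 (Or.inr hx))
    refine ⟨?_, h.2⟩
    intro hBZ
    by_cases hBY : B.satNES V (· ∈ Y)
    · exact ihH hspH (h.1 hBY)
    · obtain ⟨x, hx1, hx2, hx3⟩ := (polNN_lemma hZY B).1 hBZ hBY
      have hHZ : ∀ a ∈ H.spAtoms, a ∉ Z := by
        intro a haH haZ
        exact hdep a haZ x hx1 hx2 ⟨(B, H), hsp (Set.mem_insert _ _), haH, hx3⟩
      exact satNES_of_spAtoms (h.2 (satNES_sat hBZ)) hHZ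

lemma atoms_finite (F : PFml A) : F.atoms.Finite := by
  induction F with
  | atom a => exact Set.finite_singleton a
  | bot => exact Set.finite_empty
  | and F G ihF ihG => exact ihF.union ihG
  | or F G ihF ihG => exact ihF.union ihG
  | imp F G ihF ihG => exact ihF.union ihG

lemma find_loop {V : A → Prop} (F : PFml A) :
    ∀ n (Y : Set A), Y.ncard ≤ n → Y.Finite → Y.Nonempty → Y ⊆ F.atoms →
      F.satNES V (· ∈ Y) → ∃ Z, F.isLoop Z ∧ Z ⊆ Y ∧ F.satNES V (· ∈ Z) := by
  intro n
  induction n with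
  | zero =>
    intro Y hcard hfin hne _ _
    have := (Set.ncard_pos hfin).2 hne
    omega
  | succ n ih =>
    intro Y hcard hfin hne hsub hnes
    by_cases hsc : SMLF.SCin F.depends Y
    · exact ⟨Y, ⟨hne, hsub, hsc⟩, subset_rfl, hnes⟩
    · simp only [SMLF.SCin] at hsc
      push_neg at hsc
      obtain ⟨a, ha, b, hb, hnr⟩ := hsc
      set Z : Set A :=
        {c | c ∈ Y ∧ Relation.ReflTransGen (fun x y => x ∈ Y ∧ y ∈ Y ∧ F.depends x y) a c}
        with hZdef
      have hZY : Z ⊆ Y := fun c hc => hc.1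
      have haZ : a ∈ Z := ⟨ha, Relation.ReflTransGen.refl⟩
      have hbZ : b ∉ Z := fun h => hnr h.2
      have hclosed : ∀ c ∈ Z, ∀ d ∈ Y, d ∉ Z → ¬ F.depends c d := by
        intro c hc d hd hdZ hdep
        exact hdZ ⟨hd, hc.2.tail ⟨hc.1, hd, hdep⟩⟩
      have hnesZ := shrink hZY F hclosed F subset_rfl hnes
      have hss : Z ⊂ Y := hZY.ssubset_of_ne (fun h => hbZ (h ▸ hb))
      have hlt : Z.ncard < Y.ncard := Set.ncard_lt_ncard hss hfin
      obtain ⟨W, hW, hWZ, hWnes⟩ := ih Z (by omega) (hfin.subset hZY) ⟨a, haZ⟩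
        (hZY.trans hsub) hnesZ
      exact ⟨W, hW, hWZ.trans hZY, hWnes⟩

end Aux

end Prp

open Prp in
/-- for a propositional formula `F`, under the assumption `F`,
`SM[F]` is equivalent to the conjunction of `⋀Y → ¬NES_F(Y⃗)` for (b) all nonempty sets
`Y` of atoms occurring in `F`, and (c) all loops `Y` of `F`. -/
theorem statement_2 {A : Type} (F : Prp.PFml A) (hatoms : ∀ a : A, a ∈ F.atoms)
    (V : A → Prop) (hV : F.sat V) :
    (Prp.satSM V F ↔
      ∀ Y : Set A, Y.Nonempty → Y ⊆ F.atoms →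
        ((∀ a ∈ Y, V a) → ¬ F.satNES V (fun a => a ∈ Y))) ∧
    (Prp.satSM V F ↔
      ∀ Y : Set A, F.isLoop Y →
        ((∀ a ∈ Y, V a) → ¬ F.satNES V (fun a => a ∈ Y))) := by
  classical
  have hbiff : Prp.satSM V F ↔
      ∀ Y : Set A, Y.Nonempty → Y ⊆ F.atoms →
        ((∀ a ∈ Y, V a) → ¬ F.satNES V (fun a => a ∈ Y)) := by
    constructor
    · rintro ⟨_, hmin⟩ Y hne hsub hVY hnes
      apply hmin
      refine ⟨fun a => V a ∧ a ∉ Y, ⟨fun a h => h.1, ?_⟩, ?_⟩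
      · intro h
        obtain ⟨a, haY⟩ := hne
        exact ((h a).2 (hVY a haY)).2 haY
      · exact (Prp.satNES_iff_satStar F).1 hnes
    · intro hb
      refine ⟨hV, ?_⟩
      rintro ⟨U, ⟨hle, hneq⟩, hstar⟩
      obtain ⟨a, hna⟩ : ∃ a, ¬ (U a ↔ V a) := by
        by_contra h; push_neg at h; exact hneq h
      have hVa : V a ∧ ¬ U a := by
        by_cases hU : U a
        · exact absurd (iff_of_true hU (hle a hU)) hna
        · by_cases hVa : V a
          · exact ⟨hVa, hU⟩
          · exact absurd (iff_of_false hU hVa) hna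
      set Y : Set A := {x | V x ∧ ¬ U x} with hYdef
      refine hb Y ⟨a, hVa⟩ (fun x _ => hatoms x) (fun x hx => hx.1) ?_
      refine (Prp.satNES_iff_satStar F).2 ?_
      refine (Prp.satStar_congr (U := U) ?_ F).1 hstar
      intro x
      constructor
      · intro hU
        exact ⟨hle x hU, fun h => h.2 hU⟩
      · rintro ⟨hVx, h2⟩
        by_contra hU
        exact h2 ⟨hVx, hU⟩
  refine ⟨hbiff, hbiff.trans ⟨?_, ?_⟩⟩
  · intro hb Y hl
    exact hb Y hl.1 hl.2.1
  · intro hc Y hne hsub hVY hnes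
    obtain ⟨Z, hZloop, hZY, hZnes⟩ :=
      Prp.find_loop F Y.ncard Y le_rfl ((Prp.atoms_finite F).subset hsub) hne hsub hnes
    exact hc Z hZloop (fun x hx => hVY x (hZY hx)) hZnes


end SMLF
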